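/- arXiv:2107.11611 — 3 statements merged into one kernel-verified Lean document; each statement's English description precedes it below -/
import Mathlib

section
/- Fix τ > 0. (i) If W is a stochastic (respectively substochastic) solution of equation (QW), then Y = τ^{-1}(W − I) is a generator (respectively subgenerator) satisfying F(Y) = 0. (ii) Consequently, if any two generator solutions of F(Y) = 0 are equal, then equation (QW) has at most one stochastic solution; and if any two subgenerator solutions of F(Y) = 0 are equal, then equation (QW) has at most one substochastic solution. -/
open MeasureTheory Matrix Filter

noncomputable section

/-- Entrywise Bochner integral over `(0,∞)` of a matrix-valued function. -/
def intP {n : ℕ} (f : ℝ → Matrix (Fin n) (Fin n) ℝ) : Matrix (Fin n) (Fin n) ℝ :=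
  Matrix.of fun i j => ∫ x in Set.Ioi (0:ℝ), f x i j

/-- Matrix exponential. -/
def mexp {n : ℕ} (A : Matrix (Fin n) (Fin n) ℝ) : Matrix (Fin n) (Fin n) ℝ :=
  NormedSpace.exp A

/-- `∫_0^x e^{Gs} ds` (entrywise). -/
def cumExp {n : ℕ} (G : Matrix (Fin n) (Fin n) ℝ) (x : ℝ) : Matrix (Fin n) (Fin n) ℝ :=
  Matrix.of fun i j => ∫ s in (0:ℝ)..x, mexp (s • G) i j

/-- Irreducibility of a square matrix: for all `i ≠ j` there is a path from `i` to `j`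
along nonzero entries. -/
def MatIrr {m : Type*} (A : Matrix m m ℝ) : Prop :=
  ∀ i j : m, i ≠ j → ∃ (r : ℕ) (p : ℕ → m), p 0 = i ∧ p r = j ∧
    ∀ k < r, A (p k) (p (k+1)) ≠ 0

/-- Spectral radius of a real matrix: supremum of the moduli of its complex eigenvalues. -/
def specRad {m : Type*} [Fintype m] [DecidableEq m] (A : Matrix m m ℝ) : ℝ :=
  sSup ((fun z : ℂ => ‖z‖) '' (spectrum ℂ (A.map (algebraMap ℝ ℂ))))

/-- `A` is an M-matrix: `A = s•I − B` with `B ≥ 0` entrywise and `ρ(B) ≤ s`. -/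
def IsMMatrix {m : Type*} [Fintype m] [DecidableEq m] (A : Matrix m m ℝ) : Prop :=
  ∃ (s : ℝ) (B : Matrix m m ℝ), (∀ i j, 0 ≤ B i j) ∧ specRad B ≤ s ∧
    A = s • (1 : Matrix m m ℝ) - B

/-- `A = M − N` is a regular splitting: `M` invertible, `M⁻¹ ≥ 0`, `N ≥ 0`. -/
def RegSplit {n : ℕ} (A M N : Matrix (Fin n) (Fin n) ℝ) : Prop :=
  A = M - N ∧ IsUnit M.det ∧ (∀ i j, 0 ≤ M⁻¹ i j) ∧ (∀ i j, 0 ≤ N i j)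

/-- The complex characteristic roots (eigenvalues with algebraic multiplicity)
of a real matrix. -/
def cRoots {n : ℕ} (Y : Matrix (Fin n) (Fin n) ℝ) : Multiset ℂ :=
  ((Y.map (algebraMap ℝ ℂ)).charpoly).roots

/-- substochastic matrix -/
def Substoch {n : ℕ} (W : Matrix (Fin n) (Fin n) ℝ) : Prop :=
  (∀ i j, 0 ≤ W i j) ∧ ∀ i, ∑ j, W i j ≤ 1

/-- stochastic matrix -/
def StochMat {n : ℕ} (W : Matrix (Fin n) (Fin n) ℝ) : Prop :=
  (∀ i j, 0 ≤ W i j) ∧ ∀ i, ∑ j, W i j = 1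

/-- subgenerator -/
def IsSubGen {n : ℕ} (Y : Matrix (Fin n) (Fin n) ℝ) : Prop :=
  (∀ i j, i ≠ j → 0 ≤ Y i j) ∧ ∀ i, ∑ j, Y i j ≤ 0

/-- generator -/
def IsGen {n : ℕ} (Y : Matrix (Fin n) (Fin n) ℝ) : Prop :=
  (∀ i j, i ≠ j → 0 ≤ Y i j) ∧ ∀ i, ∑ j, Y i j = 0

/-- The data of a Markov-modulated Lévy process: phase generator `Q`, Brownian
drifts `a` and volatilities `s` (denoted `σ` in the paper), Lévy densities `ν`,
phase-change jump densities `μ`, and `U0 = U(0)` (the atoms at 0 of the jump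
distributions). -/
structure Dat (n : ℕ) where
  Q : Matrix (Fin n) (Fin n) ℝ
  a : Fin n → ℝ
  s : Fin n → ℝ
  ν : Fin n → ℝ → ℝ
  μ : Fin n → Fin n → ℝ → ℝ
  U0 : Matrix (Fin n) (Fin n) ℝ

namespace Dat

variable {n : ℕ} (D : Dat n)

/-- The standing assumptions of the paper. -/
structure Good : Prop where
  hn : 1 ≤ n
  hQoff : ∀ i j, i ≠ j → 0 ≤ D.Q i j
  hQrow : ∀ i, ∑ j, D.Q i j = 0
  hQirr : MatIrr D.Q
  hs : ∀ i, 0 < D.s i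
  hνc : ∀ i, ContinuousOn (D.ν i) (Set.Ioi 0)
  hν0 : ∀ i, ∀ x ∈ Set.Ioi (0:ℝ), 0 ≤ D.ν i x
  hνi : ∀ i, IntegrableOn (D.ν i) (Set.Ioi 0)
  hU0d : ∀ i, D.U0 i i = 1
  hU0o : ∀ i j, i ≠ j → D.U0 i j ∈ Set.Icc (0:ℝ) 1
  hμc : ∀ i j, i ≠ j → ContinuousOn (D.μ i j) (Set.Ioi 0)
  hμ0 : ∀ i j, ∀ x ∈ Set.Ioi (0:ℝ), 0 ≤ D.μ i j x
  hμi : ∀ i j, i ≠ j → IntegrableOn (D.μ i j) (Set.Ioi 0)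
  hμU : ∀ i j, i ≠ j → D.U0 i j + ∫ x in Set.Ioi (0:ℝ), D.μ i j x = 1
  hμd : ∀ i x, D.μ i i x = 0

/-- `Δ_a`. -/
def Da : Matrix (Fin n) (Fin n) ℝ := Matrix.diagonal D.a

/-- `Δ_{σ²}`. -/
def Ds : Matrix (Fin n) (Fin n) ℝ := Matrix.diagonal fun i => (D.s i)^2

/-- `Δ_ν(x)`. -/
def Dν (x : ℝ) : Matrix (Fin n) (Fin n) ℝ := Matrix.diagonal fun i => D.ν i x

/-- `Q ∘ μ(x)` (Hadamard product). -/
def Qμ (x : ℝ) : Matrix (Fin n) (Fin n) ℝ := Matrix.of fun i j => D.Q i j * D.μ i j x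

/-- The matrix function `F`. -/
def F (Y : Matrix (Fin n) (Fin n) ℝ) : Matrix (Fin n) (Fin n) ℝ :=
  D.Da * Y + (1/2 : ℝ) • (D.Ds * (Y * Y))
    + intP (fun x => D.Dν x * (mexp (x • Y) - 1))
    + Matrix.hadamard D.Q D.U0
    + intP (fun x => D.Qμ x * mexp (x • Y))

/-- The drift `κ`, relative to the stationary vector `π` of `Q`. -/
def kappa (π : Fin n → ℝ) : ℝ :=
  ∑ i, π i * (D.a i + (∫ x in Set.Ioi (0:ℝ), x * D.ν i x)
    + ∑ j, D.Q i j * ∫ x in Set.Ioi (0:ℝ), x * D.μ i j x)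

/-- `π` is the (positive) stationary probability vector of `Q`. -/
def IsStat (π : Fin n → ℝ) : Prop :=
  (∀ i, 0 < π i) ∧ (∀ j, ∑ i, π i * D.Q i j = 0) ∧ ∑ i, π i = 1

/-- `H(τ, W)`. -/
def H (τ : ℝ) (W : Matrix (Fin n) (Fin n) ℝ) : Matrix (Fin n) (Fin n) ℝ :=
  intP (fun x => D.Dν x * (mexp ((τ⁻¹ * x) • (W - 1)) - 1))

/-- `K(τ, W)`. -/
def K (τ : ℝ) (W : Matrix (Fin n) (Fin n) ℝ) : Matrix (Fin n) (Fin n) ℝ :=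
  Matrix.hadamard D.Q D.U0 + intP (fun x => D.Qμ x * mexp ((τ⁻¹ * x) • (W - 1)))

/-- `B_1`. -/
def B1 : Matrix (Fin n) (Fin n) ℝ := D.Ds

/-- `B_0(τ)`. -/
def B0 (τ : ℝ) : Matrix (Fin n) (Fin n) ℝ := (2*τ) • D.Da - (2:ℝ) • D.Ds

/-- `B_{-1}(τ, W)`. -/
def Bm1 (τ : ℝ) (W : Matrix (Fin n) (Fin n) ℝ) : Matrix (Fin n) (Fin n) ℝ :=
  D.Ds - (2*τ) • D.Da + (2*τ^2) • (D.H τ W + D.K τ W)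

/-- Equation (QW): `B₁W² + B₀(τ)W + B₋₁(τ,W) = 0`. -/
def QW (τ : ℝ) (W : Matrix (Fin n) (Fin n) ℝ) : Prop :=
  D.B1 * (W * W) + D.B0 τ * W + D.Bm1 τ W = 0

/-- `B̃_{-1}(τ, W) = −B₀(τ)⁻¹ B₋₁(τ,W)`. -/
def Btm1 (τ : ℝ) (W : Matrix (Fin n) (Fin n) ℝ) : Matrix (Fin n) (Fin n) ℝ :=
  -(D.B0 τ)⁻¹ * D.Bm1 τ W

/-- `B̃_1(τ) = −B₀(τ)⁻¹ B₁`. -/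
def Bt1 (τ : ℝ) : Matrix (Fin n) (Fin n) ℝ := -(D.B0 τ)⁻¹ * D.B1

/-- `0 < τ < τ*`: `troot i` is the unique positive root `τ_i` of the quadratic
`σ_i² − 2τ a_i + 2τ²(q_ii − ∫_0^∞ ν_i)`, `τ` is positive, `τ < σ_i²/a_i` whenever
`a_i > 0`, and `τ < τ_i` for all `i`. -/
def TauOK (troot : Fin n → ℝ) (τ : ℝ) : Prop :=
  (∀ i, 0 < troot i ∧
      (D.s i)^2 - 2 * troot i * D.a i
        + 2 * (troot i)^2 * (D.Q i i - ∫ x in Set.Ioi (0:ℝ), D.ν i x) = 0 ∧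
      ∀ t > 0, (D.s i)^2 - 2 * t * D.a i
        + 2 * t^2 * (D.Q i i - ∫ x in Set.Ioi (0:ℝ), D.ν i x) = 0 → t = troot i) ∧
  0 < τ ∧ (∀ i, 0 < D.a i → τ < (D.s i)^2 / D.a i) ∧ (∀ i, τ < troot i)

/-- `ρ_i = ∫_0^∞ ν_i`. -/
def rho (i : Fin n) : ℝ := ∫ x in Set.Ioi (0:ℝ), D.ν i x

/-- `λ_i = ρ_i + |q_ii|`. -/
def lam (i : Fin n) : ℝ := D.rho i + |D.Q i i|

/-- `b_i`. -/
def b (i : Fin n) : ℝ := (Real.sqrt ((D.a i)^2 + 2 * D.lam i * (D.s i)^2) + D.a i) / (D.s i)^2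

/-- `c_i`. -/
def c (i : Fin n) : ℝ := D.b i - 2 * D.a i / (D.s i)^2

/-- `Ĉ(X)`. -/
def Chat (X : Matrix (Fin n) (Fin n) ℝ) : Matrix (Fin n) (Fin n) ℝ :=
  Matrix.hadamard (D.Q - Matrix.diagonal fun i => D.Q i i) D.U0
    + intP (fun x => D.Dν x * mexp (x • (X - Matrix.diagonal D.b)))
    + intP (fun x => D.Qμ x * mexp (x • (X - Matrix.diagonal D.b)))

/-- `NARE(W)`: the Riccati equation `S² − Δ_c S − S Δ_b + 2Δ_{σ²}⁻¹ Ĉ(W) = 0` in `S`. -/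
def NARE (W S : Matrix (Fin n) (Fin n) ℝ) : Prop :=
  S * S - Matrix.diagonal D.c * S - S * Matrix.diagonal D.b
    + (2:ℝ) • (Matrix.diagonal (fun i => ((D.s i)^2)⁻¹) * D.Chat W) = 0

/-- `S` is the minimal nonnegative solution of `NARE(W)`. -/
def MinSolNARE (W S : Matrix (Fin n) (Fin n) ℝ) : Prop :=
  (∀ i j, 0 ≤ S i j) ∧ D.NARE W S ∧
    ∀ T, (∀ i j, 0 ≤ T i j) → D.NARE W T → ∀ i j, S i j ≤ T i j

/-- `Λ` (relative to `G`). -/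
def Lam (G : Matrix (Fin n) (Fin n) ℝ) : Matrix (Fin n) (Fin n) ℝ :=
  intP (fun x => D.Dν x * cumExp G x) + intP (fun x => D.Qμ x * cumExp G x)

/-- `Θ = −2Δ_a − Δ_{σ²}G − 2Λ` (relative to `G`). -/
def Theta (G : Matrix (Fin n) (Fin n) ℝ) : Matrix (Fin n) (Fin n) ℝ :=
  (-2 : ℝ) • D.Da - D.Ds * G - (2:ℝ) • D.Lam G

/-- Integrability of the first moments `∫ x ν_i(x) dx`, `∫ x μ_ij(x) dx`. -/
def Moments : Prop :=
  (∀ i, IntegrableOn (fun x => x * D.ν i x) (Set.Ioi (0:ℝ))) ∧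
  (∀ i j, IntegrableOn (fun x => x * D.μ i j x) (Set.Ioi (0:ℝ)))

end Dat


private lemma FY_key {n : ℕ} (D : Dat n) (τ : ℝ) (hτ : τ ≠ 0)
    (W : Matrix (Fin n) (Fin n) ℝ) :
    (2*τ^2) • D.F (τ⁻¹ • (W - 1))
      = D.B1 * (W * W) + D.B0 τ * W + D.Bm1 τ W := by
  simp only [Dat.F, Dat.B1, Dat.B0, Dat.Bm1, Dat.H, Dat.K]
  set Y := τ⁻¹ • (W - 1) with hY
  have hHK : ∀ x : ℝ, (τ⁻¹ * x) • (W - 1) = x • Y := by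
    intro x; rw [hY, smul_smul, mul_comm]
  simp only [hHK]
  have hW : W = τ • Y + 1 := by
    rw [hY, smul_smul, mul_inv_cancel₀ hτ, one_smul, sub_add_cancel]
  rw [hW]
  simp only [mul_add, add_mul, mul_one, one_mul, sub_mul, smul_mul_assoc,
    mul_smul_comm]
  module

private lemma FY_zero {n : ℕ} (D : Dat n) (τ : ℝ) (hτ : 0 < τ)
    (W : Matrix (Fin n) (Fin n) ℝ) (hQW : D.QW τ W) :
    D.F (τ⁻¹ • (W - 1)) = 0 := by
  have key := FY_key D τ (ne_of_gt hτ) W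
  rw [Dat.QW] at hQW
  rw [hQW] at key
  rcases smul_eq_zero.mp key with h | h
  · exact absurd h (by positivity)
  · exact h

private lemma rowsum_Y {n : ℕ} (τ : ℝ) (W : Matrix (Fin n) (Fin n) ℝ) (i : Fin n) :
    ∑ j, (τ⁻¹ • (W - 1)) i j = τ⁻¹ * ((∑ j, W i j) - 1) := by
  simp only [Matrix.smul_apply, Matrix.sub_apply, smul_eq_mul, mul_sub,
    ← Finset.mul_sum, Finset.sum_sub_distrib]
  congr 2
  simp [Matrix.one_apply]

private lemma offdiag_Y {n : ℕ} (τ : ℝ) (hτ : 0 < τ)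
    (W : Matrix (Fin n) (Fin n) ℝ) (h0 : ∀ i j, 0 ≤ W i j)
    {i j : Fin n} (hij : i ≠ j) : 0 ≤ (τ⁻¹ • (W - 1)) i j := by
  simp only [Matrix.smul_apply, Matrix.sub_apply, smul_eq_mul,
    Matrix.one_apply_ne hij, sub_zero]
  have := h0 i j
  positivity

/-- stochastic/substochastic solutions of (QW) give (sub)generator
solutions of `F(Y)=0`, and uniqueness transfers. -/
theorem stmt1 {n : ℕ} (D : Dat n) (hD : D.Good) (τ : ℝ) (hτ : 0 < τ) :
    ((∀ W, StochMat W → D.QW τ W →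
        IsGen (τ⁻¹ • (W - 1)) ∧ D.F (τ⁻¹ • (W - 1)) = 0) ∧
     (∀ W, Substoch W → D.QW τ W →
        IsSubGen (τ⁻¹ • (W - 1)) ∧ D.F (τ⁻¹ • (W - 1)) = 0)) ∧
    ((∀ Y₁ Y₂ : Matrix (Fin n) (Fin n) ℝ,
        IsGen Y₁ → D.F Y₁ = 0 → IsGen Y₂ → D.F Y₂ = 0 → Y₁ = Y₂) →
      ∀ W₁ W₂, StochMat W₁ → D.QW τ W₁ → StochMat W₂ → D.QW τ W₂ → W₁ = W₂) ∧
    ((∀ Y₁ Y₂ : Matrix (Fin n) (Fin n) ℝ,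
        IsSubGen Y₁ → D.F Y₁ = 0 → IsSubGen Y₂ → D.F Y₂ = 0 → Y₁ = Y₂) →
      ∀ W₁ W₂, Substoch W₁ → D.QW τ W₁ → Substoch W₂ → D.QW τ W₂ → W₁ = W₂) := by
  have hτ' : τ ≠ 0 := ne_of_gt hτ
  have hinj : ∀ W₁ W₂ : Matrix (Fin n) (Fin n) ℝ,
      τ⁻¹ • (W₁ - 1) = τ⁻¹ • (W₂ - 1) → W₁ = W₂ := by
    intro W₁ W₂ h
    have h2 := smul_right_injective (Matrix (Fin n) (Fin n) ℝ)
      (inv_ne_zero hτ') h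
    exact sub_left_injective h2
  have hstoch : ∀ W, StochMat W → D.QW τ W →
      IsGen (τ⁻¹ • (W - 1)) ∧ D.F (τ⁻¹ • (W - 1)) = 0 := by
    intro W hW hQW
    refine ⟨⟨fun i j hij => offdiag_Y τ hτ W hW.1 hij, fun i => ?_⟩,
      FY_zero D τ hτ W hQW⟩
    rw [rowsum_Y, hW.2 i, sub_self, mul_zero]
  have hsub : ∀ W, Substoch W → D.QW τ W →
      IsSubGen (τ⁻¹ • (W - 1)) ∧ D.F (τ⁻¹ • (W - 1)) = 0 := by
    intro W hW hQW
    refine ⟨⟨fun i j hij => offdiag_Y τ hτ W hW.1 hij, fun i => ?_⟩,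
      FY_zero D τ hτ W hQW⟩
    rw [rowsum_Y]
    have h1 : (∑ j, W i j) - 1 ≤ 0 := by linarith [hW.2 i]
    have h2 : 0 ≤ τ⁻¹ := by positivity
    exact mul_nonpos_of_nonneg_of_nonpos h2 h1
  refine ⟨⟨hstoch, hsub⟩, fun huniq W₁ W₂ hS₁ hQ₁ hS₂ hQ₂ => ?_,
    fun huniq W₁ W₂ hS₁ hQ₁ hS₂ hQ₂ => ?_⟩
  · obtain ⟨hg₁, hf₁⟩ := hstoch W₁ hS₁ hQ₁
    obtain ⟨hg₂, hf₂⟩ := hstoch W₂ hS₂ hQ₂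
    exact hinj _ _ (huniq _ _ hg₁ hf₁ hg₂ hf₂)
  · obtain ⟨hg₁, hf₁⟩ := hsub W₁ hS₁ hQ₁
    obtain ⟨hg₂, hf₂⟩ := hsub W₂ hS₂ hQ₂
    exact hinj _ _ (huniq _ _ hg₁ hf₁ hg₂ hf₂)
end
end

section
/- Assume that W is a stochastic or substochastic n×n matrix and that 0 < τ < τ*. Then the matrices B_{-1}(τ,W), −B_0(τ) and B_1 are entrywise nonnegative, and (B_{-1}(τ,W) + B_0(τ) + B_1)1 ≤ 0. -/
open MeasureTheory Matrix Filter

noncomputable section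

section AuxExp
attribute [local instance] Matrix.linftyOpNormedAddCommGroup Matrix.linftyOpNormedRing
  Matrix.linftyOpNormedAlgebra

variable {n : ℕ}

lemma substoch_pow {W : Matrix (Fin n) (Fin n) ℝ} (hW : Substoch W) (k : ℕ) :
    Substoch (W ^ k) := by
  induction k with
  | zero =>
    refine ⟨fun i j => ?_, fun i => ?_⟩
    · simp [Matrix.one_apply]; positivity
    · simp [Matrix.one_apply]
  | succ k ih =>
    rw [pow_succ]
    refine ⟨fun i j => ?_, fun i => ?_⟩
    · rw [Matrix.mul_apply]
      exact Finset.sum_nonneg fun k _ => mul_nonneg (ih.1 _ _) (hW.1 _ _)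
    · calc ∑ j, (W ^ k * W) i j = ∑ l, (W ^ k) i l * ∑ j, W l j := by
            simp_rw [Matrix.mul_apply, Finset.mul_sum]; rw [Finset.sum_comm]
        _ ≤ ∑ l, (W ^ k) i l * 1 := by
            exact Finset.sum_le_sum fun l _ => mul_le_mul_of_nonneg_left (hW.2 l) (ih.1 _ _)
        _ ≤ 1 := by simpa using ih.2 i

/-- entry evaluation has sum -/
lemma hasSum_mexp_entry (A : Matrix (Fin n) (Fin n) ℝ) (i j : Fin n) :
    HasSum (fun k : ℕ => ((k.factorial : ℝ)⁻¹ • A ^ k) i j) (mexp A i j) := by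
  have h := NormedSpace.exp_series_hasSum_exp' (𝕂 := ℝ) A
  have := h.map (AddMonoidHom.mk' (fun M : Matrix (Fin n) (Fin n) ℝ => M i j)
    (fun a b => rfl)) ((continuous_apply_apply i j : Continuous fun M : Matrix (Fin n) (Fin n) ℝ => M i j))
  exact this

lemma hasSum_exp_real (c : ℝ) :
    HasSum (fun k : ℕ => ((k.factorial : ℝ)⁻¹ * c ^ k)) (Real.exp c) := by
  have h := NormedSpace.exp_series_hasSum_exp' (𝕂 := ℝ) c
  simpa [Real.exp_eq_exp_ℝ, smul_eq_mul] using h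

lemma mexp_smul_substoch_nonneg {W : Matrix (Fin n) (Fin n) ℝ} (hW : Substoch W)
    {c : ℝ} (hc : 0 ≤ c) (i j : Fin n) : 0 ≤ mexp (c • W) i j :=
  hasSum_le (g := fun k : ℕ => ((k.factorial : ℝ)⁻¹ • (c • W) ^ k) i j) (fun k => by
    simp only [Matrix.smul_apply, smul_eq_mul, smul_pow]
    have := (substoch_pow hW k).1 i j
    positivity) hasSum_zero (hasSum_mexp_entry (c • W) i j)

lemma mexp_smul_substoch_rowsum {W : Matrix (Fin n) (Fin n) ℝ} (hW : Substoch W)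
    {c : ℝ} (hc : 0 ≤ c) (i : Fin n) : ∑ j, mexp (c • W) i j ≤ Real.exp c := by
  have h1 : HasSum (fun k : ℕ => ∑ j, ((k.factorial : ℝ)⁻¹ • (c • W) ^ k) i j)
      (∑ j, mexp (c • W) i j) := hasSum_sum fun j _ => hasSum_mexp_entry (c • W) i j
  refine hasSum_le (fun k => ?_) h1 (hasSum_exp_real c)
  simp only [Matrix.smul_apply, smul_eq_mul, smul_pow]
  have hpk := substoch_pow hW k
  calc ∑ j, (k.factorial : ℝ)⁻¹ * (c ^ k • (W ^ k)) i j
      = (k.factorial : ℝ)⁻¹ * (c ^ k * ∑ j, (W ^ k) i j) := by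
        rw [Finset.mul_sum, Finset.mul_sum]
        refine Finset.sum_congr rfl fun j _ => ?_
        simp [mul_assoc]
    _ ≤ (k.factorial : ℝ)⁻¹ * (c ^ k * 1) := by
        have h2 := hpk.2 i
        have h3 : (0:ℝ) ≤ (k.factorial : ℝ)⁻¹ := by positivity
        have h4 : (0:ℝ) ≤ c ^ k := by positivity
        gcongr
    _ = (k.factorial : ℝ)⁻¹ * c ^ k := by ring

lemma mexp_subgen {W : Matrix (Fin n) (Fin n) ℝ} (hW : Substoch W)
    {c : ℝ} (hc : 0 ≤ c) (i j : Fin n) :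
    mexp (c • (W - 1)) i j = Real.exp (-c) * mexp (c • W) i j := by
  have hsplit : c • (W - 1) = (-c) • (1 : Matrix (Fin n) (Fin n) ℝ) + c • W := by
    rw [smul_sub]; module
  have hcomm : Commute ((-c) • (1 : Matrix (Fin n) (Fin n) ℝ)) (c • W) :=
    ((Commute.one_left (c • W)).smul_left (-c))
  rw [mexp, hsplit, Matrix.exp_add_of_commute _ _ hcomm]
  have h1 : NormedSpace.exp ((-c) • (1 : Matrix (Fin n) (Fin n) ℝ))
      = Matrix.diagonal (fun _ : Fin n => Real.exp (-c)) := by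
    rw [Matrix.smul_one_eq_diagonal, Matrix.exp_diagonal]
    congr 1
    ext k
    rw [Pi.exp_def]
    simp [Real.exp_eq_exp_ℝ]
  rw [h1, Matrix.diagonal_mul, mexp]

lemma mexp_subgen_nonneg {W : Matrix (Fin n) (Fin n) ℝ} (hW : Substoch W)
    {c : ℝ} (hc : 0 ≤ c) (i j : Fin n) : 0 ≤ mexp (c • (W - 1)) i j := by
  rw [mexp_subgen hW hc]
  exact mul_nonneg (Real.exp_nonneg _) (mexp_smul_substoch_nonneg hW hc i j)

lemma mexp_subgen_rowsum {W : Matrix (Fin n) (Fin n) ℝ} (hW : Substoch W)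
    {c : ℝ} (hc : 0 ≤ c) (i : Fin n) : ∑ j, mexp (c • (W - 1)) i j ≤ 1 := by
  have : ∑ j, mexp (c • (W - 1)) i j = Real.exp (-c) * ∑ j, mexp (c • W) i j := by
    rw [Finset.mul_sum]; exact Finset.sum_congr rfl fun j _ => mexp_subgen hW hc i j
  rw [this]
  calc Real.exp (-c) * ∑ j, mexp (c • W) i j ≤ Real.exp (-c) * Real.exp c := by
        gcongr
        exact mexp_smul_substoch_rowsum hW hc i
    _ = 1 := by rw [← Real.exp_add]; simp

lemma mexp_subgen_le_one {W : Matrix (Fin n) (Fin n) ℝ} (hW : Substoch W)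
    {c : ℝ} (hc : 0 ≤ c) (i j : Fin n) : mexp (c • (W - 1)) i j ≤ 1 := by
  calc mexp (c • (W - 1)) i j ≤ ∑ l, mexp (c • (W - 1)) i l :=
        Finset.single_le_sum (fun l _ => mexp_subgen_nonneg hW hc i l) (Finset.mem_univ j)
    _ ≤ 1 := mexp_subgen_rowsum hW hc i

lemma mexp_entry_continuous (G : Matrix (Fin n) (Fin n) ℝ) (i j : Fin n) :
    Continuous fun x : ℝ => mexp (x • G) i j := by
  have h1 : Continuous fun x : ℝ => x • G := continuous_id.smul continuous_const
  have h2 : Continuous (NormedSpace.exp : Matrix (Fin n) (Fin n) ℝ → _) :=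
    NormedSpace.exp_continuous
  exact ((h2.comp h1).matrix_elem i j)

end AuxExp

lemma quad_nonneg {σ2 a d t r : ℝ} (hσ : 0 < σ2) (hroot : σ2 - 2*r*a + 2*r^2*d = 0)
    (huniq : ∀ s > 0, σ2 - 2*s*a + 2*s^2*d = 0 → s = r)
    (ht0 : 0 < t) (htr : t < r) : 0 ≤ σ2 - 2*t*a + 2*t^2*d := by
  by_contra h
  push_neg at h
  have hcont : ContinuousOn (fun s : ℝ => σ2 - 2*s*a + 2*s^2*d) (Set.Icc 0 t) :=
    (((continuous_const.sub ((continuous_const.mul continuous_id).mul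
      continuous_const)).add ((continuous_const.mul (continuous_pow 2)).mul
      continuous_const)) : Continuous fun s : ℝ => σ2 - 2*s*a + 2*s^2*d).continuousOn
  have hmem : (0:ℝ) ∈ Set.Icc (σ2 - 2*t*a + 2*t^2*d) (σ2 - 2*0*a + 2*0^2*d) := by
    constructor
    · exact h.le
    · nlinarith
  obtain ⟨s, hsmem, hfs⟩ := intermediate_value_Icc' ht0.le hcont hmem
  have hspos : 0 < s := by
    rcases lt_or_eq_of_le hsmem.1 with h' | h'
    · exact h'
    · exfalso; rw [← h'] at hfs; norm_num at hfs; nlinarith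
  have := huniq s hspos hfs
  linarith [hsmem.2]

/-- Theorem 3 of the paper: sign properties of the coefficients of (QW). -/
theorem stmt2 {n : ℕ} (D : Dat n) (hD : D.Good) (troot : Fin n → ℝ) (τ : ℝ)
    (hτ : D.TauOK troot τ) (W : Matrix (Fin n) (Fin n) ℝ) (hW : Substoch W) :
    (∀ i j, 0 ≤ D.Bm1 τ W i j) ∧ (∀ i j, 0 ≤ (-(D.B0 τ)) i j) ∧ (∀ i j, 0 ≤ D.B1 i j) ∧
    (∀ i, ∑ j, (D.Bm1 τ W + D.B0 τ + D.B1) i j ≤ 0) := by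
  obtain ⟨htroot, hτ0, hτa, hτt⟩ := hτ
  have hτ2 : (0:ℝ) ≤ 2 * τ ^ 2 := by positivity
  set E : ℝ → Matrix (Fin n) (Fin n) ℝ := fun x => mexp ((τ⁻¹ * x) • (W - 1)) with hEdef
  have hc : ∀ x ∈ Set.Ioi (0:ℝ), 0 ≤ τ⁻¹ * x := by
    intro x hx
    have hx0 : (0:ℝ) < x := hx
    positivity
  have hE0 : ∀ x ∈ Set.Ioi (0:ℝ), ∀ i j, 0 ≤ E x i j :=
    fun x hx i j => mexp_subgen_nonneg hW (hc x hx) i j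
  have hE1 : ∀ x ∈ Set.Ioi (0:ℝ), ∀ i j, E x i j ≤ 1 :=
    fun x hx i j => mexp_subgen_le_one hW (hc x hx) i j
  have hErow : ∀ x ∈ Set.Ioi (0:ℝ), ∀ i, ∑ j, E x i j ≤ 1 :=
    fun x hx i => mexp_subgen_rowsum hW (hc x hx) i
  have hEc : ∀ i j, Continuous fun x => E x i j := fun i j =>
    (mexp_entry_continuous (W - 1) i j).comp (continuous_const.mul continuous_id)
  have hνm : ∀ i, AEStronglyMeasurable (D.ν i) (volume.restrict (Set.Ioi 0)) :=
    fun i => (hD.hνc i).aestronglyMeasurable measurableSet_Ioi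
  have hμm : ∀ i k, AEStronglyMeasurable (D.μ i k) (volume.restrict (Set.Ioi 0)) := by
    intro i k
    by_cases h : i = k
    · subst h
      have hz : D.μ i i = fun _ => 0 := funext (hD.hμd i)
      rw [hz]; exact aestronglyMeasurable_const
    · exact (hD.hμc i k h).aestronglyMeasurable measurableSet_Ioi
  have hμint : ∀ i k, IntegrableOn (D.μ i k) (Set.Ioi 0) := by
    intro i k
    by_cases h : i = k
    · subst h
      have hz : D.μ i i = fun _ => 0 := funext (hD.hμd i)
      rw [hz]; exact integrableOn_zero
    · exact hD.hμi i k h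
  -- entry formulas
  have hHij : ∀ i j, D.H τ W i j
      = ∫ x in Set.Ioi (0:ℝ), D.ν i x * (E x i j - (1 : Matrix (Fin n) (Fin n) ℝ) i j) := by
    intro i j
    simp [Dat.H, intP, Dat.Dν, Matrix.diagonal_mul, Matrix.sub_apply, hEdef, mexp]
  have hKij : ∀ i j, D.K τ W i j
      = D.Q i j * D.U0 i j + ∫ x in Set.Ioi (0:ℝ), ∑ k, D.Q i k * D.μ i k x * E x k j := by
    intro i j
    simp [Dat.K, intP, Dat.Qμ, Matrix.mul_apply, Matrix.add_apply, Matrix.hadamard, hEdef, mexp]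
  -- integrability
  have hHint : ∀ i j, IntegrableOn
      (fun x => D.ν i x * (E x i j - (1 : Matrix (Fin n) (Fin n) ℝ) i j)) (Set.Ioi 0) := by
    intro i j
    refine Integrable.mono' (hD.hνi i)
      ((hνm i).mul (((hEc i j).sub continuous_const).aestronglyMeasurable)) ?_
    refine (ae_restrict_iff' measurableSet_Ioi).2 (ae_of_all _ fun x hx => ?_)
    rw [Real.norm_eq_abs, abs_mul, abs_of_nonneg (hD.hν0 i x hx)]
    refine mul_le_of_le_one_right (hD.hν0 i x hx) ?_
    have h1 := hE0 x hx i j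
    have h2 := hE1 x hx i j
    rcases eq_or_ne i j with h | h
    · subst h; rw [Matrix.one_apply_eq]; rw [abs_le]; constructor <;> linarith
    · rw [Matrix.one_apply_ne h]; rw [abs_le]; constructor <;> linarith
  have hKtermint : ∀ i k j, IntegrableOn
      (fun x => D.Q i k * D.μ i k x * E x k j) (Set.Ioi 0) := by
    intro i k j
    refine Integrable.mono' ((hμint i k).const_mul |D.Q i k|)
      ((aestronglyMeasurable_const.mul (hμm i k)).mul (hEc k j).aestronglyMeasurable) ?_
    refine (ae_restrict_iff' measurableSet_Ioi).2 (ae_of_all _ fun x hx => ?_)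
    rw [Real.norm_eq_abs, abs_mul, abs_mul]
    rw [abs_of_nonneg (hD.hμ0 i k x hx)]
    refine mul_le_of_le_one_right (mul_nonneg (abs_nonneg _) (hD.hμ0 i k x hx)) ?_
    have h1 := hE0 x hx k j
    have h2 := hE1 x hx k j
    rw [abs_le]; constructor <;> linarith
  have hKsumint : ∀ i j, IntegrableOn
      (fun x => ∑ k, D.Q i k * D.μ i k x * E x k j) (Set.Ioi 0) :=
    fun i j => integrable_finset_sum _ fun k _ => hKtermint i k j
  -- μ integrals
  have hμval : ∀ i k, (∫ x in Set.Ioi (0:ℝ), D.μ i k x) = 1 - D.U0 i k := by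
    intro i k
    by_cases h : i = k
    · subst h
      have hz : D.μ i i = fun _ => 0 := funext (hD.hμd i)
      rw [hz, hD.hU0d i]
      simp
    · have := hD.hμU i k h; linarith
  -- off-diagonal nonnegativity of H, K
  have hHnonneg : ∀ i j, i ≠ j → 0 ≤ D.H τ W i j := by
    intro i j h
    rw [hHij i j]
    refine setIntegral_nonneg measurableSet_Ioi fun x hx => ?_
    rw [Matrix.one_apply_ne h]
    have := hE0 x hx i j
    have := hD.hν0 i x hx
    nlinarith
  have hKint_nonneg : ∀ i j, 0 ≤ ∫ x in Set.Ioi (0:ℝ), ∑ k, D.Q i k * D.μ i k x * E x k j := by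
    intro i j
    refine setIntegral_nonneg measurableSet_Ioi fun x hx => ?_
    refine Finset.sum_nonneg fun k _ => ?_
    by_cases h : k = i
    · subst h; simp [hD.hμd]
    · have h1 := hD.hQoff i k (Ne.symm h)
      have h2 := hD.hμ0 i k x hx
      have h3 := hE0 x hx k j
      positivity
  have hKnonneg : ∀ i j, i ≠ j → 0 ≤ D.K τ W i j := by
    intro i j h
    rw [hKij i j]
    have h1 := hD.hQoff i j h
    have h2 := (hD.hU0o i j h).1
    have := hKint_nonneg i j
    positivity
  -- diagonal bounds
  have hHdiag : ∀ i, -(∫ x in Set.Ioi (0:ℝ), D.ν i x) ≤ D.H τ W i i := by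
    intro i
    rw [hHij i i]
    have hmono := setIntegral_mono_on ((hD.hνi i).neg) (hHint i i) measurableSet_Ioi
      (fun x hx => by
        have h1 := hE0 x hx i i
        have h2 := hD.hν0 i x hx
        simp only [Pi.neg_apply, Matrix.one_apply_eq]
        nlinarith [mul_nonneg h2 h1])
    have hneg : ∫ x in Set.Ioi (0:ℝ), (-(D.ν i)) x = -(∫ x in Set.Ioi (0:ℝ), D.ν i x) := by
      simp only [Pi.neg_apply]
      exact integral_neg _
    rw [hneg] at hmono
    exact hmono
  have hKdiag : ∀ i, D.Q i i ≤ D.K τ W i i := by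
    intro i
    rw [hKij i i, hD.hU0d i]
    have := hKint_nonneg i i
    linarith
  refine ⟨?_, ?_, ?_, ?_⟩
  · -- Bm1 nonneg
    intro i j
    by_cases h : i = j
    · subst h
      have hBm : D.Bm1 τ W i i = (D.s i)^2 - 2*τ*(D.a i)
          + 2*τ^2*(D.H τ W i i + D.K τ W i i) := by
        simp only [Dat.Bm1, Dat.Ds, Dat.Da, Matrix.sub_apply, Matrix.add_apply,
          Matrix.smul_apply, Matrix.diagonal_apply_eq, smul_eq_mul]
        try ring
      obtain ⟨htr0, htreq, _⟩ := htroot i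
      have hquad := quad_nonneg (pow_pos (hD.hs i) 2) htreq ((htroot i).2.2) hτ0 (hτt i)
      have hsum : D.Q i i - (∫ x in Set.Ioi (0:ℝ), D.ν i x) ≤ D.H τ W i i + D.K τ W i i := by
        have := hHdiag i; have := hKdiag i; linarith
      have hm := mul_le_mul_of_nonneg_left hsum hτ2
      rw [hBm]
      nlinarith
    · have hBm : D.Bm1 τ W i j = 2*τ^2*(D.H τ W i j + D.K τ W i j) := by
        simp [Dat.Bm1, Dat.Ds, Dat.Da, Matrix.sub_apply, Matrix.add_apply, Matrix.smul_apply,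
          Matrix.diagonal_apply_ne _ h]
        ring
      rw [hBm]
      have := hHnonneg i j h
      have := hKnonneg i j h
      positivity
  · -- -B0 nonneg
    intro i j
    by_cases h : i = j
    · subst h
      have : (-(D.B0 τ)) i i = 2*(D.s i)^2 - 2*τ*(D.a i) := by
        simp only [Dat.B0, Dat.Ds, Dat.Da, Matrix.neg_apply, Matrix.sub_apply,
          Matrix.smul_apply, Matrix.diagonal_apply_eq, smul_eq_mul]
        try ring
      rw [this]
      rcases le_or_gt (D.a i) 0 with ha | ha
      · have := hD.hs i; nlinarith
      · have h1 := hτa i ha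
        have h2 : τ * D.a i < (D.s i)^2 := (lt_div_iff₀ ha).mp h1
        nlinarith [sq_nonneg (D.s i), hD.hs i]
    · have : (-(D.B0 τ)) i j = 0 := by
        simp [Dat.B0, Dat.Ds, Dat.Da, Matrix.neg_apply, Matrix.sub_apply, Matrix.smul_apply,
          Matrix.diagonal_apply_ne _ h]
      rw [this]
  · -- B1 nonneg
    intro i j
    by_cases h : i = j
    · subst h; simp [Dat.B1, Dat.Ds, Matrix.diagonal_apply_eq]; positivity
    · simp [Dat.B1, Dat.Ds, Matrix.diagonal_apply_ne _ h]
  · -- row sums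
    intro i
    have hsum_eq : ∑ j, (D.Bm1 τ W + D.B0 τ + D.B1) i j
        = 2*τ^2 * ∑ j, (D.H τ W i j + D.K τ W i j) := by
      rw [Finset.mul_sum]
      refine Finset.sum_congr rfl fun j _ => ?_
      simp only [Dat.Bm1, Dat.B0, Dat.B1, Matrix.add_apply, Matrix.sub_apply,
        Matrix.smul_apply, smul_eq_mul]
      try ring
    rw [hsum_eq]
    have hHrow : ∑ j, D.H τ W i j ≤ 0 := by
      have : ∑ j, D.H τ W i j = ∫ x in Set.Ioi (0:ℝ),
          ∑ j, D.ν i x * (E x i j - (1 : Matrix (Fin n) (Fin n) ℝ) i j) := by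
        rw [integral_finset_sum _ fun j _ => hHint i j]
        exact Finset.sum_congr rfl fun j _ => hHij i j
      rw [this]
      refine setIntegral_nonpos measurableSet_Ioi fun x hx => ?_
      have hrw : ∑ j, D.ν i x * (E x i j - (1 : Matrix (Fin n) (Fin n) ℝ) i j)
          = D.ν i x * ((∑ j, E x i j) - 1) := by
        have hone : ∑ j, (1 : Matrix (Fin n) (Fin n) ℝ) i j = 1 := by
          simp [Matrix.one_apply]
        rw [← Finset.mul_sum, Finset.sum_sub_distrib, hone]
      rw [hrw]
      have h1 := hErow x hx i
      have h2 := hD.hν0 i x hx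
      exact mul_nonpos_iff.mpr (Or.inl ⟨h2, by linarith⟩)
    have hKrow : ∑ j, D.K τ W i j ≤ 0 := by
      have hsplit : ∑ j, D.K τ W i j = (∑ j, D.Q i j * D.U0 i j)
          + ∑ j, ∫ x in Set.Ioi (0:ℝ), ∑ k, D.Q i k * D.μ i k x * E x k j := by
        rw [← Finset.sum_add_distrib]
        exact Finset.sum_congr rfl fun j _ => hKij i j
      have hint_eq : ∑ j, (∫ x in Set.Ioi (0:ℝ), ∑ k, D.Q i k * D.μ i k x * E x k j)
          = ∫ x in Set.Ioi (0:ℝ), ∑ j, ∑ k, D.Q i k * D.μ i k x * E x k j := by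
        rw [integral_finset_sum _ fun j _ => hKsumint i j]
      have hbound : (∫ x in Set.Ioi (0:ℝ), ∑ j, ∑ k, D.Q i k * D.μ i k x * E x k j)
          ≤ ∫ x in Set.Ioi (0:ℝ), ∑ k, D.Q i k * D.μ i k x := by
        refine setIntegral_mono_on (integrable_finset_sum _ fun j _ => hKsumint i j)
          (integrable_finset_sum _ fun k _ => (hμint i k).const_mul (D.Q i k))
          measurableSet_Ioi (fun x hx => ?_)
        rw [Finset.sum_comm]
        refine Finset.sum_le_sum fun k _ => ?_
        by_cases hk : k = i
        · subst hk
          simp [hD.hμd]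
        · have hq := hD.hQoff i k (Ne.symm hk)
          have hm := hD.hμ0 i k x hx
          have hrowE := hErow x hx k
          calc ∑ j, D.Q i k * D.μ i k x * E x k j
              = D.Q i k * D.μ i k x * ∑ j, E x k j := by rw [Finset.mul_sum]
            _ ≤ D.Q i k * D.μ i k x :=
                mul_le_of_le_one_right (by positivity) hrowE
      have hval : (∫ x in Set.Ioi (0:ℝ), ∑ k, D.Q i k * D.μ i k x)
          = ∑ k, D.Q i k * (1 - D.U0 i k) := by
        rw [integral_finset_sum _ fun k _ => (hμint i k).const_mul (D.Q i k)]
        refine Finset.sum_congr rfl fun k _ => ?_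
        rw [MeasureTheory.integral_const_mul, hμval i k]
      have hfinal : (∑ j, D.Q i j * D.U0 i j) + ∑ k, D.Q i k * (1 - D.U0 i k) = 0 := by
        rw [← Finset.sum_add_distrib]
        have : ∀ k, D.Q i k * D.U0 i k + D.Q i k * (1 - D.U0 i k) = D.Q i k := fun k => by ring
        rw [Finset.sum_congr rfl fun k _ => this k]
        exact hD.hQrow i
      rw [hsplit, hint_eq]
      linarith [hbound, hval.le, hval.ge]
    have := Finset.sum_add_distrib (s := (Finset.univ : Finset (Fin n)))
      (f := fun j => D.H τ W i j) (g := fun j => D.K τ W i j)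
    rw [this]
    exact mul_nonpos_iff.mpr (Or.inl ⟨hτ2, by linarith⟩)
end
end

section
/- For any τ > 0: if W is a substochastic n×n matrix, then K(τ,W) is a subgenerator and H(τ,W)1 ≤ 0; if W is stochastic, then K(τ,W) is a generator. -/
open MeasureTheory Matrix Filter

noncomputable section

namespace StmtAux
open scoped Nat


variable {n : ℕ}

/-- Apply a linear functional to the matrix exponential, entrywise tsum form. -/
lemma map_exp_tsum (L : Matrix (Fin n) (Fin n) ℝ →ₗ[ℝ] ℝ) (A : Matrix (Fin n) (Fin n) ℝ) :
    L (mexp A) = ∑' k : ℕ, ((k ! : ℝ)⁻¹ * L (A ^ k)) ∧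
      Summable (fun k : ℕ => ((k ! : ℝ)⁻¹ * L (A ^ k))) := by
  letI : SeminormedRing (Matrix (Fin n) (Fin n) ℝ) := Matrix.linftyOpSemiNormedRing
  letI : NormedRing (Matrix (Fin n) (Fin n) ℝ) := Matrix.linftyOpNormedRing
  letI : NormedAlgebra ℝ (Matrix (Fin n) (Fin n) ℝ) := Matrix.linftyOpNormedAlgebra
  have hs : Summable (fun k : ℕ => ((k ! : ℝ)⁻¹) • A ^ k) :=
    NormedSpace.expSeries_summable' (𝕂 := ℝ) A
  have hL : Continuous L := LinearMap.continuous_of_finiteDimensional L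
  let L' : Matrix (Fin n) (Fin n) ℝ →L[ℝ] ℝ := ⟨L, hL⟩
  have key : ∀ k : ℕ, L' (((k ! : ℝ)⁻¹) • A ^ k) = (k ! : ℝ)⁻¹ * L (A ^ k) := by
    intro k; simp [L', smul_eq_mul]
  constructor
  · have h1 : L' (mexp A) = ∑' k : ℕ, L' (((k ! : ℝ)⁻¹) • A ^ k) := by
      rw [mexp, NormedSpace.exp_eq_tsum ℝ]
      exact L'.map_tsum hs
    have h1' : L (mexp A) = ∑' k : ℕ, L' (((k ! : ℝ)⁻¹) • A ^ k) := h1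
    simpa [key] using h1'
  · have := hs.map L'.toLinearMap.toAddMonoidHom hL
    refine this.congr fun k => ?_
    simpa using key k

/-- row-sum linear functional -/
def rowL (i : Fin n) : Matrix (Fin n) (Fin n) ℝ →ₗ[ℝ] ℝ where
  toFun A := ∑ j, A i j
  map_add' A B := by simp [Finset.sum_add_distrib]
  map_smul' c A := by simp [Finset.mul_sum]

/-- entry linear functional -/
def entL (i j : Fin n) : Matrix (Fin n) (Fin n) ℝ →ₗ[ℝ] ℝ where
  toFun A := A i j
  map_add' A B := rfl
  map_smul' c A := rfl

lemma matPow_nonneg {W : Matrix (Fin n) (Fin n) ℝ} (hW : ∀ i j, 0 ≤ W i j) (k : ℕ) :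
    ∀ i j, 0 ≤ (W ^ k) i j := by
  induction k with
  | zero => intro i j; by_cases h : i = j <;> simp [h, Matrix.one_apply]
  | succ k ih =>
    intro i j
    rw [pow_succ, Matrix.mul_apply]
    exact Finset.sum_nonneg fun m _ => mul_nonneg (ih i m) (hW m j)

lemma pow_rowsum_le {W : Matrix (Fin n) (Fin n) ℝ} (hW : ∀ i j, 0 ≤ W i j)
    (hr : ∀ i, ∑ j, W i j ≤ 1) (k : ℕ) : ∀ i, ∑ j, (W ^ k) i j ≤ 1 := by
  induction k with
  | zero => intro i; simp [Matrix.one_apply]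
  | succ k ih =>
    intro i
    rw [pow_succ']  -- W ^ (k+1) = W * W ^ k
    calc ∑ j, (W * W ^ k) i j = ∑ m, W i m * ∑ j, (W ^ k) m j := by
          simp only [Matrix.mul_apply]
          rw [Finset.sum_comm]
          simp [Finset.mul_sum]
      _ ≤ ∑ m, W i m * 1 := by
          refine Finset.sum_le_sum fun m _ => ?_
          exact mul_le_mul_of_nonneg_left (ih m) (hW i m)
      _ ≤ 1 := by simpa using hr i

lemma pow_rowsum_eq {W : Matrix (Fin n) (Fin n) ℝ}
    (hr : ∀ i, ∑ j, W i j = 1) (k : ℕ) : ∀ i, ∑ j, (W ^ k) i j = 1 := by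
  induction k with
  | zero => intro i; simp [Matrix.one_apply]
  | succ k ih =>
    intro i
    rw [pow_succ']
    calc ∑ j, (W * W ^ k) i j = ∑ m, W i m * ∑ j, (W ^ k) m j := by
          simp only [Matrix.mul_apply]
          rw [Finset.sum_comm]
          simp [Finset.mul_sum]
      _ = ∑ m, W i m * 1 := by simp [fun m => ih m]
      _ = 1 := by simpa using hr i

lemma mexp_factor (W : Matrix (Fin n) (Fin n) ℝ) (t : ℝ) :
    mexp (t • (W - 1)) = Real.exp (-t) • mexp (t • W) := by
  letI : SeminormedRing (Matrix (Fin n) (Fin n) ℝ) := Matrix.linftyOpSemiNormedRing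
  letI : NormedRing (Matrix (Fin n) (Fin n) ℝ) := Matrix.linftyOpNormedRing
  letI : NormedAlgebra ℝ (Matrix (Fin n) (Fin n) ℝ) := Matrix.linftyOpNormedAlgebra
  have h1 : t • (W - 1) = t • W + (-t) • (1 : Matrix (Fin n) (Fin n) ℝ) := by
    rw [smul_sub]; module
  have hc : Commute (t • W) ((-t) • (1 : Matrix (Fin n) (Fin n) ℝ)) :=
    ((Commute.one_right (t • W)).smul_right (-t))
  rw [h1, mexp, Matrix.exp_add_of_commute _ _ hc]
  have h2 : (-t) • (1 : Matrix (Fin n) (Fin n) ℝ) = algebraMap ℝ _ (-t) := by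
    rw [Algebra.algebraMap_eq_smul_one]
  have h3 : NormedSpace.exp ((-t) • (1 : Matrix (Fin n) (Fin n) ℝ))
      = Real.exp (-t) • (1 : Matrix (Fin n) (Fin n) ℝ) := by
    letI : NormedAlgebra ℚ (Matrix (Fin n) (Fin n) ℝ) := .restrictScalars ℚ ℝ _
    have hx := NormedSpace.algebraMap_exp_comm (𝔸 := Matrix (Fin n) (Fin n) ℝ) (-t)
    rw [← Real.exp_eq_exp_ℝ, Algebra.algebraMap_eq_smul_one] at hx
    rw [h2]
    exact hx.symm
  rw [h3, mexp]
  rw [mul_smul_comm, mul_one]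


lemma real_exp_tsum (t : ℝ) : Real.exp t = ∑' k : ℕ, ((k ! : ℝ)⁻¹ * t ^ k) := by
  rw [Real.exp_eq_exp_ℝ, NormedSpace.exp_eq_tsum ℝ]
  simp [smul_eq_mul]

lemma real_exp_summable (t : ℝ) : Summable (fun k : ℕ => ((k ! : ℝ)⁻¹ * t ^ k)) := by
  have := NormedSpace.expSeries_summable' (𝕂 := ℝ) t
  simpa [smul_eq_mul] using this

lemma exp_smul_entry_nonneg {W : Matrix (Fin n) (Fin n) ℝ} (hW : ∀ i j, 0 ≤ W i j)
    {t : ℝ} (ht : 0 ≤ t) (i j : Fin n) : 0 ≤ mexp (t • W) i j := by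
  obtain ⟨he, _⟩ := map_exp_tsum (entL i j) (t • W)
  have : mexp (t • W) i j = entL i j (mexp (t • W)) := rfl
  rw [this, he]
  refine tsum_nonneg fun k => ?_
  have h2 : entL i j ((t • W) ^ k) = t ^ k * (W ^ k) i j := by
    rw [smul_pow]; rfl
  rw [h2]
  exact mul_nonneg (by positivity) (mul_nonneg (by positivity) (matPow_nonneg hW k i j))
  
lemma exp_smul_rowsum_le {W : Matrix (Fin n) (Fin n) ℝ} (hW : ∀ i j, 0 ≤ W i j)
    (hr : ∀ i, ∑ j, W i j ≤ 1) {t : ℝ} (ht : 0 ≤ t) (i : Fin n) :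
    ∑ j, mexp (t • W) i j ≤ Real.exp t := by
  obtain ⟨he, hs⟩ := map_exp_tsum (rowL i) (t • W)
  have h0 : ∑ j, mexp (t • W) i j = rowL i (mexp (t • W)) := rfl
  rw [h0, he, real_exp_tsum t]
  refine Summable.tsum_le_tsum (fun k => ?_) hs (real_exp_summable t)
  have h2 : rowL i ((t • W) ^ k) = t ^ k * ∑ j, (W ^ k) i j := by
    rw [smul_pow]
    show ∑ j, (t ^ k • W ^ k) i j = _
    simp [Matrix.smul_apply, Finset.mul_sum]
  rw [h2]
  have h3 : t ^ k * ∑ j, (W ^ k) i j ≤ t ^ k * 1 :=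
    mul_le_mul_of_nonneg_left (pow_rowsum_le hW hr k i) (_root_.pow_nonneg ht k)
  calc (k ! : ℝ)⁻¹ * (t ^ k * ∑ j, (W ^ k) i j) ≤ (k ! : ℝ)⁻¹ * (t ^ k * 1) := by
        refine mul_le_mul_of_nonneg_left h3 (by positivity)
    _ = (k ! : ℝ)⁻¹ * t ^ k := by ring

lemma exp_smul_rowsum_eq {W : Matrix (Fin n) (Fin n) ℝ}
    (hr : ∀ i, ∑ j, W i j = 1) (t : ℝ) (i : Fin n) :
    ∑ j, mexp (t • W) i j = Real.exp t := by
  obtain ⟨he, _⟩ := map_exp_tsum (rowL i) (t • W)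
  have h0 : ∑ j, mexp (t • W) i j = rowL i (mexp (t • W)) := rfl
  rw [h0, he, real_exp_tsum t]
  refine tsum_congr fun k => ?_
  have h2 : rowL i ((t • W) ^ k) = t ^ k * ∑ j, (W ^ k) i j := by
    rw [smul_pow]
    show ∑ j, (t ^ k • W ^ k) i j = _
    simp [Matrix.smul_apply, Finset.mul_sum]
  rw [h2, pow_rowsum_eq hr k i, mul_one]

lemma E_nonneg {W : Matrix (Fin n) (Fin n) ℝ} (hW : ∀ i j, 0 ≤ W i j)
    {t : ℝ} (ht : 0 ≤ t) (i j : Fin n) : 0 ≤ mexp (t • (W - 1)) i j := by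
  rw [mexp_factor]
  have : (Real.exp (-t) • mexp (t • W)) i j = Real.exp (-t) * mexp (t • W) i j := rfl
  rw [this]
  exact mul_nonneg (Real.exp_nonneg _) (exp_smul_entry_nonneg hW ht i j)

lemma E_rowsum_le {W : Matrix (Fin n) (Fin n) ℝ} (hW : ∀ i j, 0 ≤ W i j)
    (hr : ∀ i, ∑ j, W i j ≤ 1) {t : ℝ} (ht : 0 ≤ t) (i : Fin n) :
    ∑ j, mexp (t • (W - 1)) i j ≤ 1 := by
  rw [mexp_factor]
  have h0 : ∑ j, (Real.exp (-t) • mexp (t • W)) i j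
      = Real.exp (-t) * ∑ j, mexp (t • W) i j := by
    simp [Matrix.smul_apply, Finset.mul_sum]
  rw [h0]
  calc Real.exp (-t) * ∑ j, mexp (t • W) i j ≤ Real.exp (-t) * Real.exp t :=
        mul_le_mul_of_nonneg_left (exp_smul_rowsum_le hW hr ht i) (Real.exp_nonneg _)
    _ = 1 := by rw [← Real.exp_add]; simp

lemma E_rowsum_eq {W : Matrix (Fin n) (Fin n) ℝ}
    (hr : ∀ i, ∑ j, W i j = 1) (t : ℝ) (i : Fin n) :
    ∑ j, mexp (t • (W - 1)) i j = 1 := by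
  rw [mexp_factor]
  have h0 : ∑ j, (Real.exp (-t) • mexp (t • W)) i j
      = Real.exp (-t) * ∑ j, mexp (t • W) i j := by
    simp [Matrix.smul_apply, Finset.mul_sum]
  rw [h0, exp_smul_rowsum_eq hr t i, ← Real.exp_add]; simp

lemma E_le_one {W : Matrix (Fin n) (Fin n) ℝ} (hW : ∀ i j, 0 ≤ W i j)
    (hr : ∀ i, ∑ j, W i j ≤ 1) {t : ℝ} (ht : 0 ≤ t) (i j : Fin n) :
    mexp (t • (W - 1)) i j ≤ 1 := by
  calc mexp (t • (W - 1)) i j ≤ ∑ j', mexp (t • (W - 1)) i j' :=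
        Finset.single_le_sum (fun j' _ => E_nonneg hW ht i j') (Finset.mem_univ j)
    _ ≤ 1 := E_rowsum_le hW hr ht i

lemma E_continuous (W : Matrix (Fin n) (Fin n) ℝ) (τ : ℝ) (i j : Fin n) :
    Continuous fun x : ℝ => mexp ((τ⁻¹ * x) • (W - 1)) i j := by
  have h1 : Continuous fun x : ℝ => (τ⁻¹ * x) • (W - 1) :=
    (continuous_const.mul continuous_id).smul continuous_const
  have h2 : Continuous (fun A : Matrix (Fin n) (Fin n) ℝ => NormedSpace.exp A) := by
    letI : SeminormedRing (Matrix (Fin n) (Fin n) ℝ) := Matrix.linftyOpSemiNormedRing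
    letI : NormedRing (Matrix (Fin n) (Fin n) ℝ) := Matrix.linftyOpNormedRing
    letI : NormedAlgebra ℝ (Matrix (Fin n) (Fin n) ℝ) := Matrix.linftyOpNormedAlgebra
    letI : NormedAlgebra ℚ (Matrix (Fin n) (Fin n) ℝ) := .restrictScalars ℚ ℝ _
    exact NormedSpace.exp_continuous
  have h3 : Continuous (fun A : Matrix (Fin n) (Fin n) ℝ => A i j) :=
    (continuous_apply j).comp (continuous_apply i)
  exact h3.comp (h2.comp h1)

variable {n : ℕ}

lemma ht_of_mem {τ x : ℝ} (hτ : 0 < τ) (hx : x ∈ Set.Ioi (0:ℝ)) : 0 ≤ τ⁻¹ * x :=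
  mul_nonneg (inv_nonneg.mpr hτ.le) (le_of_lt hx)

lemma K_entry (D : Dat n) (τ : ℝ) (W : Matrix (Fin n) (Fin n) ℝ) (i j : Fin n) :
    D.K τ W i j = D.Q i j * D.U0 i j
      + ∫ x in Set.Ioi (0:ℝ), ∑ k, D.Q i k * D.μ i k x * mexp ((τ⁻¹ * x) • (W - 1)) k j := by
  simp only [Dat.K, Matrix.add_apply, Matrix.hadamard_apply, intP, Matrix.of_apply,
    Matrix.mul_apply, Dat.Qμ]

lemma H_entry (D : Dat n) (τ : ℝ) (W : Matrix (Fin n) (Fin n) ℝ) (i j : Fin n) :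
    D.H τ W i j = ∫ x in Set.Ioi (0:ℝ),
      D.ν i x * (mexp ((τ⁻¹ * x) • (W - 1)) i j - (1 : Matrix (Fin n) (Fin n) ℝ) i j) := by
  simp only [Dat.H, intP, Matrix.of_apply, Dat.Dν, Matrix.diagonal_mul, Matrix.sub_apply]

lemma Ksummand_int (D : Dat n) (hD : D.Good) {τ : ℝ} (hτ : 0 < τ)
    {W : Matrix (Fin n) (Fin n) ℝ} (hW0 : ∀ i j, 0 ≤ W i j) (hWr : ∀ i, ∑ j, W i j ≤ 1)
    (i k j : Fin n) :
    IntegrableOn (fun x => D.Q i k * D.μ i k x * mexp ((τ⁻¹ * x) • (W - 1)) k j)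
      (Set.Ioi (0:ℝ)) := by
  rcases eq_or_ne k i with rfl | hk
  · have hfun : (fun x => D.Q k k * D.μ k k x * mexp ((τ⁻¹ * x) • (W - 1)) k j)
        = fun _ => (0:ℝ) := by
      funext x; rw [hD.hμd]; ring
    rw [hfun]; exact integrableOn_zero
  · have hmeas : AEStronglyMeasurable
        (fun x => D.Q i k * D.μ i k x * mexp ((τ⁻¹ * x) • (W - 1)) k j)
        (volume.restrict (Set.Ioi (0:ℝ))) :=
      ((continuousOn_const.mul (hD.hμc i k hk.symm)).mul
        (E_continuous W τ k j).continuousOn).aestronglyMeasurable measurableSet_Ioi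
    refine Integrable.mono' ((hD.hμi i k hk.symm).const_mul (D.Q i k)) hmeas ?_
    rw [ae_restrict_iff' measurableSet_Ioi]
    refine ae_of_all _ fun x hx => ?_
    have hQ : 0 ≤ D.Q i k := hD.hQoff i k hk.symm
    have hμ : 0 ≤ D.μ i k x := hD.hμ0 i k x hx
    have hE0 := E_nonneg hW0 (ht_of_mem hτ hx) k j
    have hE1 := E_le_one hW0 hWr (ht_of_mem hτ hx) k j
    rw [Real.norm_eq_abs, abs_of_nonneg (by positivity)]
    exact mul_le_of_le_one_right (mul_nonneg hQ hμ) hE1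

lemma Kdom_int (D : Dat n) (hD : D.Good) (i k : Fin n) :
    IntegrableOn (fun x => D.Q i k * D.μ i k x) (Set.Ioi (0:ℝ)) := by
  rcases eq_or_ne k i with rfl | hk
  · have hfun : (fun x => D.Q k k * D.μ k k x) = fun _ => (0:ℝ) := by
      funext x; rw [hD.hμd]; ring
    rw [hfun]; exact integrableOn_zero
  · exact (hD.hμi i k hk.symm).const_mul (D.Q i k)

lemma K_target (D : Dat n) (hD : D.Good) (i : Fin n) :
    ∑ k, (D.Q i k * D.U0 i k + D.Q i k * ∫ x in Set.Ioi (0:ℝ), D.μ i k x) = 0 := by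
  have : ∀ k, D.Q i k * D.U0 i k + D.Q i k * (∫ x in Set.Ioi (0:ℝ), D.μ i k x) = D.Q i k := by
    intro k
    rcases eq_or_ne k i with rfl | hk
    · have h0 : (∫ x in Set.Ioi (0:ℝ), D.μ k k x) = 0 := by simp [hD.hμd]
      rw [h0, hD.hU0d, mul_one, mul_zero, add_zero]
    · have h2 := hD.hμU i k hk.symm
      have h3 : (∫ x in Set.Ioi (0:ℝ), D.μ i k x) = 1 - D.U0 i k := by linarith
      rw [h3]; ring
  rw [Finset.sum_congr rfl fun k _ => this k]
  exact hD.hQrow i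

lemma K_offdiag (D : Dat n) (hD : D.Good) {τ : ℝ} (hτ : 0 < τ)
    {W : Matrix (Fin n) (Fin n) ℝ} (hW0 : ∀ i j, 0 ≤ W i j)
    (i j : Fin n) (hij : i ≠ j) : 0 ≤ D.K τ W i j := by
  rw [K_entry]
  have h1 : 0 ≤ D.Q i j * D.U0 i j :=
    mul_nonneg (hD.hQoff i j hij) (hD.hU0o i j hij).1
  have h2 : 0 ≤ ∫ x in Set.Ioi (0:ℝ),
      ∑ k, D.Q i k * D.μ i k x * mexp ((τ⁻¹ * x) • (W - 1)) k j := by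
    refine setIntegral_nonneg measurableSet_Ioi fun x hx => ?_
    refine Finset.sum_nonneg fun k _ => ?_
    rcases eq_or_ne k i with rfl | hk
    · rw [hD.hμd]; simp
    · exact mul_nonneg (mul_nonneg (hD.hQoff i k hk.symm) (hD.hμ0 i k x hx))
        (E_nonneg hW0 (ht_of_mem hτ hx) k j)
  linarith

lemma K_rowsum (D : Dat n) (hD : D.Good) {τ : ℝ} (hτ : 0 < τ)
    {W : Matrix (Fin n) (Fin n) ℝ} (hW0 : ∀ i j, 0 ≤ W i j) (hWr : ∀ i, ∑ j, W i j ≤ 1)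
    (i : Fin n) :
    ∑ j, D.K τ W i j = ∑ j, (D.Q i j * D.U0 i j)
      + ∫ x in Set.Ioi (0:ℝ), ∑ k, (D.Q i k * D.μ i k x) * ∑ j, mexp ((τ⁻¹ * x) • (W - 1)) k j := by
  have h1 : ∑ j, D.K τ W i j = ∑ j, (D.Q i j * D.U0 i j)
      + ∑ j, ∫ x in Set.Ioi (0:ℝ), ∑ k, D.Q i k * D.μ i k x * mexp ((τ⁻¹ * x) • (W - 1)) k j := by
    rw [← Finset.sum_add_distrib]
    exact Finset.sum_congr rfl fun j _ => K_entry D τ W i j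
  rw [h1]
  congr 1
  rw [← integral_finset_sum _ (fun j _ => integrable_finset_sum _
    (fun k _ => Ksummand_int D hD hτ hW0 hWr i k j))]
  refine setIntegral_congr_fun measurableSet_Ioi fun x _ => ?_
  rw [Finset.sum_comm]
  exact Finset.sum_congr rfl fun k _ => by rw [Finset.mul_sum]

lemma K_rowsum_le (D : Dat n) (hD : D.Good) {τ : ℝ} (hτ : 0 < τ)
    {W : Matrix (Fin n) (Fin n) ℝ} (hW0 : ∀ i j, 0 ≤ W i j) (hWr : ∀ i, ∑ j, W i j ≤ 1)
    (i : Fin n) : ∑ j, D.K τ W i j ≤ 0 := by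
  rw [K_rowsum D hD hτ hW0 hWr i]
  have hint1 : IntegrableOn
      (fun x => ∑ k, (D.Q i k * D.μ i k x) * ∑ j, mexp ((τ⁻¹ * x) • (W - 1)) k j)
      (Set.Ioi (0:ℝ)) := by
    refine integrable_finset_sum _ fun k _ => ?_
    have : (fun x => (D.Q i k * D.μ i k x) * ∑ j, mexp ((τ⁻¹ * x) • (W - 1)) k j)
        = fun x => ∑ j, D.Q i k * D.μ i k x * mexp ((τ⁻¹ * x) • (W - 1)) k j := by
      funext x; rw [Finset.mul_sum]
    rw [this]
    exact integrable_finset_sum _ fun j _ => Ksummand_int D hD hτ hW0 hWr i k j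
  have hint2 : IntegrableOn (fun x => ∑ k, D.Q i k * D.μ i k x) (Set.Ioi (0:ℝ)) :=
    integrable_finset_sum _ fun k _ => Kdom_int D hD i k
  have hmono : (∫ x in Set.Ioi (0:ℝ),
        ∑ k, (D.Q i k * D.μ i k x) * ∑ j, mexp ((τ⁻¹ * x) • (W - 1)) k j)
      ≤ ∫ x in Set.Ioi (0:ℝ), ∑ k, D.Q i k * D.μ i k x := by
    refine setIntegral_mono_on hint1 hint2 measurableSet_Ioi fun x hx => ?_
    refine Finset.sum_le_sum fun k _ => ?_
    rcases eq_or_ne k i with rfl | hk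
    · rw [hD.hμd]; simp
    · exact mul_le_of_le_one_right
        (mul_nonneg (hD.hQoff i k hk.symm) (hD.hμ0 i k x hx))
        (E_rowsum_le hW0 hWr (ht_of_mem hτ hx) k)
  have hval : (∫ x in Set.Ioi (0:ℝ), ∑ k, D.Q i k * D.μ i k x)
      = ∑ k, D.Q i k * ∫ x in Set.Ioi (0:ℝ), D.μ i k x := by
    rw [integral_finset_sum _ (fun k _ => Kdom_int D hD i k)]
    exact Finset.sum_congr rfl fun k _ => integral_const_mul _ _
  have htar := K_target D hD i
  rw [Finset.sum_add_distrib] at htar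
  linarith [hmono, hval]

lemma K_rowsum_eq (D : Dat n) (hD : D.Good) {τ : ℝ} (hτ : 0 < τ)
    {W : Matrix (Fin n) (Fin n) ℝ} (hW0 : ∀ i j, 0 ≤ W i j) (hWr : ∀ i, ∑ j, W i j = 1)
    (i : Fin n) : ∑ j, D.K τ W i j = 0 := by
  have hWr' : ∀ i, ∑ j, W i j ≤ 1 := fun i => le_of_eq (hWr i)
  rw [K_rowsum D hD hτ hW0 hWr' i]
  have hcongr : (∫ x in Set.Ioi (0:ℝ),
        ∑ k, (D.Q i k * D.μ i k x) * ∑ j, mexp ((τ⁻¹ * x) • (W - 1)) k j)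
      = ∫ x in Set.Ioi (0:ℝ), ∑ k, D.Q i k * D.μ i k x := by
    refine setIntegral_congr_fun measurableSet_Ioi fun x _ => ?_
    refine Finset.sum_congr rfl fun k _ => ?_
    rw [E_rowsum_eq hWr (τ⁻¹ * x) k, mul_one]
  have hval : (∫ x in Set.Ioi (0:ℝ), ∑ k, D.Q i k * D.μ i k x)
      = ∑ k, D.Q i k * ∫ x in Set.Ioi (0:ℝ), D.μ i k x := by
    rw [integral_finset_sum _ (fun k _ => Kdom_int D hD i k)]
    exact Finset.sum_congr rfl fun k _ => integral_const_mul _ _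
  have htar := K_target D hD i
  rw [Finset.sum_add_distrib] at htar
  rw [hcongr, hval]
  linarith

lemma Hsummand_int (D : Dat n) (hD : D.Good) {τ : ℝ} (hτ : 0 < τ)
    {W : Matrix (Fin n) (Fin n) ℝ} (hW0 : ∀ i j, 0 ≤ W i j) (hWr : ∀ i, ∑ j, W i j ≤ 1)
    (i j : Fin n) :
    IntegrableOn (fun x => D.ν i x *
      (mexp ((τ⁻¹ * x) • (W - 1)) i j - (1 : Matrix (Fin n) (Fin n) ℝ) i j))
      (Set.Ioi (0:ℝ)) := by
  have hmeas : AEStronglyMeasurable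
      (fun x => D.ν i x *
        (mexp ((τ⁻¹ * x) • (W - 1)) i j - (1 : Matrix (Fin n) (Fin n) ℝ) i j))
      (volume.restrict (Set.Ioi (0:ℝ))) :=
    ((hD.hνc i).mul ((E_continuous W τ i j).sub continuous_const).continuousOn
      ).aestronglyMeasurable measurableSet_Ioi
  refine Integrable.mono' (hD.hνi i) hmeas ?_
  rw [ae_restrict_iff' measurableSet_Ioi]
  refine ae_of_all _ fun x hx => ?_
  have hν : 0 ≤ D.ν i x := hD.hν0 i x hx
  have hE0 := E_nonneg hW0 (ht_of_mem hτ hx) i j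
  have hE1 := E_le_one hW0 hWr (ht_of_mem hτ hx) i j
  have hone0 : (0:ℝ) ≤ (1 : Matrix (Fin n) (Fin n) ℝ) i j := by
    by_cases h : i = j <;> simp [Matrix.one_apply, h]
  have hone1 : (1 : Matrix (Fin n) (Fin n) ℝ) i j ≤ 1 := by
    by_cases h : i = j <;> simp [Matrix.one_apply, h]
  rw [Real.norm_eq_abs, abs_mul, abs_of_nonneg hν]
  have habs : |mexp ((τ⁻¹ * x) • (W - 1)) i j - (1 : Matrix (Fin n) (Fin n) ℝ) i j| ≤ 1 := by
    rw [abs_le]; constructor <;> linarith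
  calc D.ν i x * |mexp ((τ⁻¹ * x) • (W - 1)) i j - (1 : Matrix (Fin n) (Fin n) ℝ) i j|
      ≤ D.ν i x * 1 := mul_le_mul_of_nonneg_left habs hν
    _ = D.ν i x := mul_one _

lemma H_rowsum_le (D : Dat n) (hD : D.Good) {τ : ℝ} (hτ : 0 < τ)
    {W : Matrix (Fin n) (Fin n) ℝ} (hW0 : ∀ i j, 0 ≤ W i j) (hWr : ∀ i, ∑ j, W i j ≤ 1)
    (i : Fin n) : ∑ j, D.H τ W i j ≤ 0 := by
  have h1 : ∑ j, D.H τ W i j = ∫ x in Set.Ioi (0:ℝ), ∑ j, D.ν i x *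
      (mexp ((τ⁻¹ * x) • (W - 1)) i j - (1 : Matrix (Fin n) (Fin n) ℝ) i j) := by
    have h0 : ∑ j, D.H τ W i j = ∑ j, ∫ x in Set.Ioi (0:ℝ), D.ν i x *
        (mexp ((τ⁻¹ * x) • (W - 1)) i j - (1 : Matrix (Fin n) (Fin n) ℝ) i j) :=
      Finset.sum_congr rfl fun j _ => H_entry D τ W i j
    rw [h0, ← integral_finset_sum _ (fun j _ => Hsummand_int D hD hτ hW0 hWr i j)]
  rw [h1]
  refine setIntegral_nonpos measurableSet_Ioi fun x hx => ?_
  have hν : 0 ≤ D.ν i x := hD.hν0 i x hx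
  have hsum : ∑ j, (mexp ((τ⁻¹ * x) • (W - 1)) i j - (1 : Matrix (Fin n) (Fin n) ℝ) i j)
      = (∑ j, mexp ((τ⁻¹ * x) • (W - 1)) i j) - 1 := by
    rw [Finset.sum_sub_distrib]
    congr 1
    simp [Matrix.one_apply]
  rw [← Finset.mul_sum, hsum]
  have := E_rowsum_le hW0 hWr (ht_of_mem hτ hx) i
  have h2 : (∑ j, mexp ((τ⁻¹ * x) • (W - 1)) i j) - 1 ≤ 0 := by linarith
  exact mul_nonpos_of_nonneg_of_nonpos hν h2


end StmtAux

/-- `K(τ,W)` is a (sub)generator and `H(τ,W)𝟙 ≤ 0`. -/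
theorem stmt3 {n : ℕ} (D : Dat n) (hD : D.Good) (τ : ℝ) (hτ : 0 < τ) :
    (∀ W, Substoch W → IsSubGen (D.K τ W) ∧ ∀ i, ∑ j, D.H τ W i j ≤ 0) ∧
    (∀ W, StochMat W → IsGen (D.K τ W)) := by
  constructor
  · rintro W ⟨hW0, hWr⟩
    exact ⟨⟨fun i j hij => StmtAux.K_offdiag D hD hτ hW0 i j hij,
      fun i => StmtAux.K_rowsum_le D hD hτ hW0 hWr i⟩,
      fun i => StmtAux.H_rowsum_le D hD hτ hW0 hWr i⟩
  · rintro W ⟨hW0, hWr⟩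
    exact ⟨fun i j hij => StmtAux.K_offdiag D hD hτ hW0 i j hij,
      fun i => StmtAux.K_rowsum_eq D hD hτ hW0 hWr i⟩
end
end
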